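/- arXiv:0901.4252 — 2 statements merged into one kernel-verified Lean document; each statement's English description precedes it below -/
import Mathlib

section
/- Let Σ and Σ̂ be symmetric m×m matrices, where Σ is diagonal with distinct diagonal entries λ_1 > λ_2 > … > λ_m and unit eigenvectors e_r. Then the r-th largest eigenvalue λ̂_r of Σ̂ satisfies |λ̂_r − λ_r − e_rᵀ(Σ̂ − Σ)e_r| ≤ 6 sup_{‖a‖=1} aᵀ(Σ̂ − Σ)²a / min_{s≠r} |λ_s − λ_r|. -/
open Matrix

section
variable {m : ℕ}

lemma sum_smul_dot (v : Fin m → (Fin m → ℝ))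
    (hv : ∀ i j, v i ⬝ᵥ v j = if i = j then 1 else 0)
    (c : Fin m → ℝ) (j : Fin m) :
    (∑ i, c i • v i) ⬝ᵥ v j = c j := by
  have step : (∑ i, c i • v i) ⬝ᵥ v j = ∑ i, c i * (v i ⬝ᵥ v j) := by
    simp only [dotProduct, Finset.sum_apply, Pi.smul_apply, smul_eq_mul,
      Finset.sum_mul, Finset.mul_sum, mul_assoc]
    exact Finset.sum_comm
  rw [step]
  simp only [hv, mul_ite, mul_one, mul_zero]
  simp

lemma on_li (v : Fin m → (Fin m → ℝ))
    (hv : ∀ i j, v i ⬝ᵥ v j = if i = j then 1 else 0) :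
    LinearIndependent ℝ v := by
  rw [Fintype.linearIndependent_iff]
  intro c hc j
  have := sum_smul_dot v hv c j
  rw [hc] at this
  simpa using this.symm

lemma on_span (v : Fin m → (Fin m → ℝ)) (hm : 0 < m)
    (hv : ∀ i j, v i ⬝ᵥ v j = if i = j then 1 else 0) :
    Submodule.span ℝ (Set.range v) = ⊤ := by
  have : Nonempty (Fin m) := ⟨⟨0, hm⟩⟩
  exact (on_li v hv).span_eq_top_of_card_eq_finrank
    (by simp [Module.finrank_fintype_fun_eq_card])

lemma on_expand (v : Fin m → (Fin m → ℝ)) (hm : 0 < m)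
    (hv : ∀ i j, v i ⬝ᵥ v j = if i = j then 1 else 0) (x : Fin m → ℝ) :
    x = ∑ i, (x ⬝ᵥ v i) • v i := by
  have hx : x ∈ Submodule.span ℝ (Set.range v) := by
    rw [on_span v hm hv]; trivial
  rw [Submodule.mem_span_range_iff_exists_fun] at hx
  obtain ⟨c, hc⟩ := hx
  have : ∀ j, x ⬝ᵥ v j = c j := by
    intro j; rw [← hc]; exact sum_smul_dot v hv c j
  nth_rewrite 1 [← hc]
  exact Finset.sum_congr rfl fun j _ => by rw [this j]

variable {m : ℕ}

lemma dot_sum_smul (x : Fin m → ℝ) (d : Fin m → ℝ) (y : Fin m → (Fin m → ℝ)) :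
    x ⬝ᵥ (∑ i, d i • y i) = ∑ i, d i * (x ⬝ᵥ y i) := by
  simp only [dotProduct, Finset.sum_apply, Pi.smul_apply, smul_eq_mul,
    Finset.mul_sum, Finset.sum_mul]
  rw [Finset.sum_comm]
  congr 1; ext i; congr 1; ext k; ring

lemma mulVec_sum_smul (A : Matrix (Fin m) (Fin m) ℝ) (c : Fin m → ℝ)
    (v : Fin m → (Fin m → ℝ)) :
    A.mulVec (∑ i, c i • v i) = ∑ i, c i • A.mulVec (v i) := by
  have : ∀ y, A.mulVec y = A.mulVecLin y := fun y => rfl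
  rw [this, map_sum]
  exact Finset.sum_congr rfl fun i _ => by rw [_root_.map_smul, this]

lemma quad_form_eig (A : Matrix (Fin m) (Fin m) ℝ) (hm : 0 < m)
    (v : Fin m → (Fin m → ℝ))
    (hv : ∀ i j, v i ⬝ᵥ v j = if i = j then 1 else 0)
    (α : Fin m → ℝ) (hAv : ∀ j, A.mulVec (v j) = α j • v j) (x : Fin m → ℝ) :
    x ⬝ᵥ A.mulVec x = ∑ i, α i * (x ⬝ᵥ v i) ^ 2 := by
  set c : Fin m → ℝ := fun i => x ⬝ᵥ v i with hc
  have h1 : A.mulVec x = ∑ i, (c i * α i) • v i := by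
    nth_rewrite 1 [on_expand v hm hv x]
    rw [mulVec_sum_smul]
    exact Finset.sum_congr rfl fun i _ => by rw [hAv i, smul_smul]
  rw [h1, dot_sum_smul]
  exact Finset.sum_congr rfl fun i _ => by simp only [hc]; ring

lemma parseval (hm : 0 < m) (v : Fin m → (Fin m → ℝ))
    (hv : ∀ i j, v i ⬝ᵥ v j = if i = j then 1 else 0) (x : Fin m → ℝ) :
    x ⬝ᵥ x = ∑ i, (x ⬝ᵥ v i) ^ 2 := by
  have := quad_form_eig (1 : Matrix (Fin m) (Fin m) ℝ) hm v hv (fun _ => 1)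
    (fun j => by simp [Matrix.one_mulVec]) x
  simpa [Matrix.one_mulVec] using this

lemma span_dot_zero (v : Fin m → (Fin m → ℝ))
    (hv : ∀ i j, v i ⬝ᵥ v j = if i = j then 1 else 0)
    (s : Set (Fin m)) (x : Fin m → ℝ)
    (hx : x ∈ Submodule.span ℝ (v '' s)) (j : Fin m) (hj : j ∉ s) :
    x ⬝ᵥ v j = 0 := by
  induction hx using Submodule.span_induction with
  | mem y hy =>
      obtain ⟨i, hi, rfl⟩ := hy
      rw [hv i j]
      simp only [ite_eq_right_iff]
      intro h; exact absurd (h ▸ hi) hj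
  | zero => simp
  | add y z _ _ hy hz => rw [add_dotProduct, hy, hz, add_zero]
  | smul a y _ hy => rw [smul_dotProduct, hy, smul_zero]

lemma finrank_span_image (v : Fin m → (Fin m → ℝ))
    (hv : ∀ i j, v i ⬝ᵥ v j = if i = j then 1 else 0) (s : Set (Fin m)) :
    Module.finrank ℝ (Submodule.span ℝ (v '' s)) = Nat.card s := by
  have hli : LinearIndependent ℝ (fun i : s => v i) :=
    (on_li v hv).comp _ Subtype.val_injective
  have himg : v '' s = Set.range (fun i : s => v i) := by
    rw [Set.image_eq_range]
  haveI : Fintype s := Set.Finite.fintype (Set.toFinite s)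
  rw [himg, finrank_span_eq_card hli]
  exact (Nat.card_eq_fintype_card).symm

lemma weyl_aux (hm : 0 < m) (A B : Matrix (Fin m) (Fin m) ℝ)
    (v w : Fin m → (Fin m → ℝ))
    (hv : ∀ i j, v i ⬝ᵥ v j = if i = j then 1 else 0)
    (hw : ∀ i j, w i ⬝ᵥ w j = if i = j then 1 else 0)
    (α β : Fin m → ℝ) (hα : Antitone α) (hβ : Antitone β)
    (hAv : ∀ j, A.mulVec (v j) = α j • v j)
    (hBw : ∀ j, B.mulVec (w j) = β j • w j)
    (c : ℝ)
    (hc : ∀ x : Fin m → ℝ, x ⬝ᵥ x = 1 → x ⬝ᵥ (A.mulVec x) - x ⬝ᵥ (B.mulVec x) ≤ c)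
    (r : Fin m) : α r ≤ β r + c := by
  classical
  set V := Submodule.span ℝ (v '' Set.Iic r) with hV
  set W := Submodule.span ℝ (w '' Set.Ici r) with hW
  have hcard : Nat.card (Set.Iic r) + Nat.card (Set.Ici r) = m + 1 := by
    have h1 : (Set.Iic r ∪ Set.Ici r) = Set.univ := by
      ext i; simpa using le_total i r
    have h2 : (Set.Iic r ∩ Set.Ici r) = {r} := by
      ext i
      simp only [Set.mem_inter_iff, Set.mem_Iic, Set.mem_Ici, Set.mem_singleton_iff]
      constructor
      · rintro ⟨h3, h4⟩; exact le_antisymm h3 h4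
      · rintro rfl; exact ⟨le_refl _, le_refl _⟩
    have := Set.ncard_union_add_ncard_inter (Set.Iic r) (Set.Ici r)
    rw [h1, h2, Set.ncard_univ, Set.ncard_singleton, Nat.card_eq_fintype_card,
      Fintype.card_fin] at this
    rw [Nat.card_coe_set_eq, Nat.card_coe_set_eq]
    omega
  have hdim : 0 < Module.finrank ℝ ↥(V ⊓ W) := by
    have hsum := Submodule.finrank_sup_add_finrank_inf_eq V W
    have hVr : Module.finrank ℝ V = Nat.card (Set.Iic r) := finrank_span_image v hv _
    have hWr : Module.finrank ℝ W = Nat.card (Set.Ici r) := finrank_span_image w hw _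
    have hle : Module.finrank ℝ ↥(V ⊔ W) ≤ m := by
      have := Submodule.finrank_le (V ⊔ W)
      rwa [Module.finrank_fintype_fun_eq_card, Fintype.card_fin] at this
    omega
  obtain ⟨x, hxVW, hx0⟩ : ∃ x : Fin m → ℝ, x ∈ V ⊓ W ∧ x ≠ 0 := by
    rw [Module.finrank_pos_iff] at hdim
    obtain ⟨x, hx⟩ := exists_ne (0 : ↥(V ⊓ W))
    exact ⟨x, x.2, by simpa [Submodule.coe_eq_zero] using hx⟩
  have hxx : 0 < x ⬝ᵥ x := by
    obtain ⟨i, hi⟩ := Function.ne_iff.mp hx0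
    have : (0:ℝ) < x i * x i := mul_self_pos.mpr (by simpa using hi)
    exact Finset.sum_pos' (fun j _ => mul_self_nonneg _) ⟨i, Finset.mem_univ i, this⟩
  set n : ℝ := Real.sqrt (x ⬝ᵥ x) with hn
  have hnpos : 0 < n := Real.sqrt_pos.mpr hxx
  set y : Fin m → ℝ := n⁻¹ • x with hy
  have hnn : n * n = x ⬝ᵥ x := Real.mul_self_sqrt hxx.le
  have hyy : y ⬝ᵥ y = 1 := by
    rw [hy, smul_dotProduct, dotProduct_smul, smul_eq_mul, smul_eq_mul, ← hnn]
    field_simp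
  have hyV : y ∈ V := Submodule.smul_mem _ _ ((Submodule.mem_inf.mp hxVW).1)
  have hyW : y ∈ W := Submodule.smul_mem _ _ ((Submodule.mem_inf.mp hxVW).2)
  have hpv : ∑ i, (y ⬝ᵥ v i) ^ 2 = 1 := by rw [← parseval hm v hv y, hyy]
  have hpw : ∑ i, (y ⬝ᵥ w i) ^ 2 = 1 := by rw [← parseval hm w hw y, hyy]
  have hA : α r ≤ y ⬝ᵥ A.mulVec y := by
    rw [quad_form_eig A hm v hv α hAv y]
    have step : ∑ i, α r * (y ⬝ᵥ v i) ^ 2 ≤ ∑ i, α i * (y ⬝ᵥ v i) ^ 2 := by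
      apply Finset.sum_le_sum
      intro i _
      rcases eq_or_ne (y ⬝ᵥ v i) 0 with h | h
      · simp [h]
      · have hi : i ≤ r := by
          by_contra hir
          exact h (span_dot_zero v hv _ y hyV i (by simpa using hir))
        exact mul_le_mul_of_nonneg_right (hα hi) (sq_nonneg _)
    have base : ∑ i, α r * (y ⬝ᵥ v i) ^ 2 = α r := by rw [← Finset.mul_sum, hpv, mul_one]
    linarith
  have hB : y ⬝ᵥ B.mulVec y ≤ β r := by
    rw [quad_form_eig B hm w hw β hBw y]
    have step : ∑ i, β i * (y ⬝ᵥ w i) ^ 2 ≤ ∑ i, β r * (y ⬝ᵥ w i) ^ 2 := by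
      apply Finset.sum_le_sum
      intro i _
      rcases eq_or_ne (y ⬝ᵥ w i) 0 with h | h
      · simp [h]
      · have hi : r ≤ i := by
          by_contra hir
          exact h (span_dot_zero w hw _ y hyW i (by simpa using hir))
        exact mul_le_mul_of_nonneg_right (hβ hi) (sq_nonneg _)
    have base : ∑ i, β r * (y ⬝ᵥ w i) ^ 2 = β r := by rw [← Finset.mul_sum, hpw, mul_one]
    linarith
  have hcy := hc y hyy
  linarith
end


set_option maxHeartbeats 2000000 in
/-- (Lemma A of Kneip–Utikal.) Let `D = diagonal lam` with strictly
decreasing diagonal and let `Shat` be symmetric with r-th largest eigenvalue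
`lamhat r`. Then
`|lamhat r − lam r − e_rᵀ(Shat − D)e_r| ≤ 6 sup_{‖a‖=1} aᵀ(Shat − D)²a / min_{s≠r}|lam s − lam r|`. -/
theorem eigenvalue_perturbation_bound
    (m : ℕ) (hm : 1 < m) (lam : Fin m → ℝ) (hlam : StrictAnti lam)
    (Shat : Matrix (Fin m) (Fin m) ℝ) (hsymm : Shat.IsSymm)
    (lamhat : Fin m → ℝ) (hanti : Antitone lamhat)
    -- `lamhat` enumerates the eigenvalues of `Shat` (orthonormal eigenbasis)
    (hdiag : ∃ v : Fin m → (Fin m → ℝ),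
      (∀ i j, v i ⬝ᵥ v j = if i = j then 1 else 0) ∧
      (∀ j, Shat.mulVec (v j) = lamhat j • v j))
    (r : Fin m) :
    |lamhat r - lam r - (Shat - Matrix.diagonal lam) r r|
      ≤ 6 * sSup {x : ℝ | ∃ a : Fin m → ℝ, (∑ i, (a i) ^ 2 = 1) ∧
            x = a ⬝ᵥ (((Shat - Matrix.diagonal lam)
              * (Shat - Matrix.diagonal lam)).mulVec a)}
        / ⨅ s : {s : Fin m // s ≠ r}, |lam s - lam r| := by
  classical
  have hm0 : 0 < m := by omega
  obtain ⟨v, hv, hSv⟩ := hdiag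
  set E : Matrix (Fin m) (Fin m) ℝ := Shat - Matrix.diagonal lam with hEdef
  have hE : Eᵀ = E := by
    rw [hEdef, Matrix.transpose_sub, hsymm.eq, Matrix.diagonal_transpose]
  set Sset : Set ℝ := {x : ℝ | ∃ a : Fin m → ℝ, (∑ i, (a i) ^ 2 = 1) ∧
      x = a ⬝ᵥ ((E * E).mulVec a)} with hSset
  set S : ℝ := sSup Sset with hSdef
  set δ : ℝ := ⨅ s : {s : Fin m // s ≠ r}, |lam s - lam r| with hδdef
  -- quadratic form of E*E is ‖Ea‖²
  have quadEE : ∀ a : Fin m → ℝ, a ⬝ᵥ ((E * E).mulVec a)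
      = ∑ i, (E.mulVec a i) ^ 2 := by
    intro a
    rw [← Matrix.mulVec_mulVec, Matrix.dotProduct_mulVec, ← Matrix.mulVec_transpose, hE]
    simp [dotProduct, sq]
  -- the set is bounded above
  have hbdd : BddAbove Sset := by
    refine ⟨∑ i, ∑ j, (E i j) ^ 2, ?_⟩
    rintro x ⟨a, ha, rfl⟩
    rw [quadEE a]
    apply Finset.sum_le_sum
    intro i _
    have h1 : (∑ j, E i j * a j) ^ 2 ≤ (∑ j, (E i j) ^ 2) * (∑ j, (a j) ^ 2) :=
      Finset.sum_mul_sq_le_sq_mul_sq _ _ _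
    rw [ha, mul_one] at h1
    exact h1
  -- unit vectors give elements ≤ S
  have hSmem : ∀ a : Fin m → ℝ, (∑ i, (a i) ^ 2 = 1) →
      ∑ i, (E.mulVec a i) ^ 2 ≤ S := by
    intro a ha
    exact le_csSup hbdd ⟨a, ha, (quadEE a).symm⟩
  -- standard basis
  set e : Fin m → (Fin m → ℝ) := fun j i => if i = j then 1 else 0 with hedef
  have hue : ∀ j, ∑ i, (e j i) ^ 2 = 1 := by
    intro j
    simp [hedef]
  have he : ∀ i j, e i ⬝ᵥ e j = if i = j then 1 else 0 := by
    intro i j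
    simp only [hedef, dotProduct]
    rcases eq_or_ne i j with rfl | hij
    · simp
    · simp only [if_neg hij]
      apply Finset.sum_eq_zero
      intro k _
      rcases eq_or_ne k i with rfl | hki
      · simp [hij]
      · simp [hki]
  have hDe : ∀ j, (Matrix.diagonal lam).mulVec (e j) = lam j • e j := by
    intro j
    funext i
    rw [Matrix.mulVec_diagonal]
    simp only [hedef, Pi.smul_apply, smul_eq_mul]
    rcases eq_or_ne i j with rfl | hij
    · simp
    · simp [hij]
  -- S is nonneg
  have hS0 : 0 ≤ S := by
    have h1 : ∑ i, (E.mulVec (e r) i) ^ 2 ≤ S := hSmem (e r) (hue r)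
    have h2 : 0 ≤ ∑ i, (E.mulVec (e r) i) ^ 2 :=
      Finset.sum_nonneg fun i _ => sq_nonneg _
    linarith
  set s : ℝ := Real.sqrt S with hsdef
  have hs0 : 0 ≤ s := Real.sqrt_nonneg _
  have hs2 : s ^ 2 = S := Real.sq_sqrt hS0
  -- |xᵀEx| ≤ s for unit x
  have habs : ∀ x : Fin m → ℝ, x ⬝ᵥ x = 1 → |x ⬝ᵥ E.mulVec x| ≤ s := by
    intro x hx
    have hx2 : ∑ i, (x i) ^ 2 = 1 := by
      rw [← hx]; simp [dotProduct, sq]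
    have h1 : (x ⬝ᵥ E.mulVec x) ^ 2 ≤ (∑ i, (x i) ^ 2) * (∑ i, (E.mulVec x i) ^ 2) :=
      Finset.sum_mul_sq_le_sq_mul_sq _ _ _
    rw [hx2, one_mul] at h1
    have h2 := hSmem x hx2
    have : (x ⬝ᵥ E.mulVec x) ^ 2 ≤ s ^ 2 := by rw [hs2]; linarith
    calc |x ⬝ᵥ E.mulVec x| = Real.sqrt ((x ⬝ᵥ E.mulVec x) ^ 2) :=
          (Real.sqrt_sq_eq_abs _).symm
      _ ≤ Real.sqrt (s ^ 2) := Real.sqrt_le_sqrt this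
      _ = s := by rw [Real.sqrt_sq hs0]
  -- quadratic forms difference
  have hdiff : ∀ x : Fin m → ℝ, x ⬝ᵥ Shat.mulVec x - x ⬝ᵥ (Matrix.diagonal lam).mulVec x
      = x ⬝ᵥ E.mulVec x := by
    intro x
    rw [hEdef, Matrix.sub_mulVec, dotProduct_sub]
  -- Weyl's inequality
  have hweyl : |lamhat r - lam r| ≤ s := by
    have h1 : lamhat r ≤ lam r + s := by
      apply weyl_aux hm0 Shat (Matrix.diagonal lam) v e hv he lamhat lam hanti
        hlam.antitone hSv hDe s
      intro x hx
      have := habs x hx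
      rw [hdiff x] at *
      cases abs_le.mp this
      linarith
    have h2 : lam r ≤ lamhat r + s := by
      apply weyl_aux hm0 (Matrix.diagonal lam) Shat e v he hv lam lamhat hlam.antitone
        hanti hDe hSv s
      intro x hx
      have := habs x hx
      have hd := hdiff x
      cases abs_le.mp this
      linarith
    rw [abs_le]
    constructor <;> linarith
  -- facts about δ
  haveI hne : Nonempty {s : Fin m // s ≠ r} := by
    rcases eq_or_ne r ⟨0, hm0⟩ with rfl | h
    · exact ⟨⟨⟨1, hm⟩, by simp [Fin.ext_iff]⟩⟩
    · exact ⟨⟨⟨0, hm0⟩, fun hc => h hc.symm⟩⟩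
  have hδle : ∀ t : {s : Fin m // s ≠ r}, δ ≤ |lam t - lam r| := by
    intro t
    apply ciInf_le
    refine ⟨0, ?_⟩
    rintro _ ⟨t', rfl⟩
    exact abs_nonneg _
  have hδpos : 0 < δ := by
    obtain ⟨t0, ht0⟩ := Finite.exists_min (fun t : {s : Fin m // s ≠ r} => |lam t - lam r|)
    have h1 : |lam t0 - lam r| ≤ δ := le_ciInf ht0
    have h2 : 0 < |lam ↑t0 - lam r| :=
      abs_pos.mpr (sub_ne_zero.mpr fun h => t0.2 (hlam.injective h))
    linarith
  -- row sums of squares of E bounded by S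
  have hrowS : ∑ i, (E r i) ^ 2 ≤ S := by
    have h1 := hSmem (e r) (hue r)
    have h2 : ∀ i, E.mulVec (e r) i = E i r := by
      intro i
      simp only [Matrix.mulVec, dotProduct, hedef]
      rw [Finset.sum_eq_single r]
      · simp
      · intro b _ hb; simp [hb]
      · intro h; exact absurd (Finset.mem_univ r) h
    have h3 : ∀ i, E r i = E i r := fun i => by
      conv_lhs => rw [← hE]
      rfl
    calc ∑ i, (E r i) ^ 2 = ∑ i, (E.mulVec (e r) i) ^ 2 := by
          apply Finset.sum_congr rfl
          intro i _
          rw [h2 i, h3 i]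
      _ ≤ S := h1
  have hErr : |E r r| ≤ s := by
    have h1 : (E r r) ^ 2 ≤ S := by
      have h0 : (E r r) ^ 2 ≤ ∑ i, (E r i) ^ 2 := by
        simpa using Finset.single_le_sum (f := fun i => (E r i) ^ 2)
          (fun i _ => sq_nonneg _) (Finset.mem_univ r)
      linarith [hrowS]
    calc |E r r| = Real.sqrt ((E r r) ^ 2) := (Real.sqrt_sq_eq_abs _).symm
      _ ≤ Real.sqrt (s ^ 2) := Real.sqrt_le_sqrt (by rw [hs2]; linarith)
      _ = s := by rw [Real.sqrt_sq hs0]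
  -- reduce goal
  rw [le_div_iff₀ hδpos]
  set X : ℝ := lamhat r - lam r - E r r with hX
  clear_value E Sset S δ s e X
  rcases le_or_gt δ (3 * s) with hcase | hcase
  · -- coarse case
    have h1 : |X| ≤ 2 * s := by
      rw [hX]
      calc |lamhat r - lam r - E r r| ≤ |lamhat r - lam r| + |E r r| := abs_sub _ _
        _ ≤ 2 * s := by linarith
    have e1 : |X| * δ ≤ 2 * s * δ := mul_le_mul_of_nonneg_right h1 hδpos.le
    have e2 : 2 * s * δ ≤ 2 * s * (3 * s) :=
      mul_le_mul_of_nonneg_left hcase (by linarith)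
    linarith [e1, e2, hs2]
  · -- fine case
    set u : Fin m → ℝ := v r with hu
    have huu : u ⬝ᵥ u = 1 := by rw [hu, hv r r]; simp
    have hu2 : ∑ i, (u i) ^ 2 = 1 := by rw [← huu]; simp [dotProduct, sq]
    have hEu : ∀ i, E.mulVec u i = (lamhat r - lam i) * u i := by
      intro i
      rw [hEdef, Matrix.sub_mulVec]
      simp only [Pi.sub_apply]
      rw [hu, hSv r, Matrix.mulVec_diagonal]
      simp only [Pi.smul_apply, smul_eq_mul]
      ring
    have key1 : ∑ i, ((lamhat r - lam i) * u i) ^ 2 ≤ S := by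
      have := hSmem u hu2
      calc ∑ i, ((lamhat r - lam i) * u i) ^ 2 = ∑ i, (E.mulVec u i) ^ 2 := by
            apply Finset.sum_congr rfl; intro i _; rw [hEu i]
        _ ≤ S := this
    set t : ℝ := ∑ i ∈ Finset.univ.erase r, (u i) ^ 2 with ht
    have ht0 : 0 ≤ t := Finset.sum_nonneg fun i _ => sq_nonneg _
    have hurt : (u r) ^ 2 = 1 - t := by
      have h0 : (u r) ^ 2 + ∑ i ∈ Finset.univ.erase r, (u i) ^ 2 = 1 := by
        rw [← hu2]
        simpa using Finset.add_sum_erase Finset.univ (fun i => (u i) ^ 2) (Finset.mem_univ r)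
      rw [ht]
      linarith
    -- gap bound
    have hgap : ∀ i : Fin m, i ≠ r → (δ - s) ^ 2 ≤ (lamhat r - lam i) ^ 2 := by
      intro i hi
      have h1 : δ ≤ |lam i - lam r| := hδle ⟨i, hi⟩
      have h2 : |lam i - lam r| ≤ |lam i - lamhat r| + |lamhat r - lam r| := by
        calc |lam i - lam r| = |(lam i - lamhat r) + (lamhat r - lam r)| := by ring_nf
          _ ≤ |lam i - lamhat r| + |lamhat r - lam r| := abs_add_le _ _
      have h3 : δ - s ≤ |lam i - lamhat r| := by linarith [hweyl]
      have h4 : 0 ≤ δ - s := by linarith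
      calc (δ - s) ^ 2 ≤ |lam i - lamhat r| ^ 2 := by nlinarith
        _ = (lamhat r - lam i) ^ 2 := by rw [sq_abs]; ring
    have hts : (δ - s) ^ 2 * t ≤ S := by
      have h1 : ∑ i ∈ Finset.univ.erase r, (δ - s) ^ 2 * (u i) ^ 2
          ≤ ∑ i ∈ Finset.univ.erase r, ((lamhat r - lam i) * u i) ^ 2 := by
        apply Finset.sum_le_sum
        intro i hi
        have := hgap i (Finset.ne_of_mem_erase hi)
        rw [mul_pow]
        nlinarith [sq_nonneg (u i)]
      have h2 : ∑ i ∈ Finset.univ.erase r, ((lamhat r - lam i) * u i) ^ 2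
          ≤ ∑ i, ((lamhat r - lam i) * u i) ^ 2 :=
        Finset.sum_le_sum_of_subset_of_nonneg (Finset.erase_subset _ _)
          (fun i _ _ => sq_nonneg _)
      rw [ht, Finset.mul_sum]
      linarith
    have ht14 : t ≤ 1 / 4 := by nlinarith [hs2]
    -- the identity
    have hid : X * u r = ∑ i ∈ Finset.univ.erase r, E r i * u i := by
      have h1 : (lamhat r - lam r) * u r = ∑ i, E r i * u i := by
        rw [← hEu r]
        simp [Matrix.mulVec, dotProduct]
      have h2 : ∑ i, E r i * u i
          = E r r * u r + ∑ i ∈ Finset.univ.erase r, E r i * u i :=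
        (Finset.add_sum_erase Finset.univ (fun i => E r i * u i) (Finset.mem_univ r)).symm
      rw [hX]
      linarith [h1, h2]
    -- Cauchy-Schwarz on the identity
    have hcs : (X * u r) ^ 2 ≤ S * t := by
      rw [hid]
      have h1 : (∑ i ∈ Finset.univ.erase r, E r i * u i) ^ 2
          ≤ (∑ i ∈ Finset.univ.erase r, (E r i) ^ 2)
            * (∑ i ∈ Finset.univ.erase r, (u i) ^ 2) :=
        Finset.sum_mul_sq_le_sq_mul_sq _ _ _
      have h2 : ∑ i ∈ Finset.univ.erase r, (E r i) ^ 2 ≤ S := by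
        have := Finset.sum_le_sum_of_subset_of_nonneg
          (Finset.erase_subset r Finset.univ) (fun i _ _ => sq_nonneg (E r i))
        linarith [hrowS]
      rw [← ht] at h1
      have h4 : (∑ i ∈ Finset.univ.erase r, (E r i) ^ 2) * t ≤ S * t :=
        mul_le_mul_of_nonneg_right h2 ht0
      linarith
    -- conclude
    have hX2 : X ^ 2 * (1 - t) ≤ S * t := by
      have : (X * u r) ^ 2 = X ^ 2 * (u r) ^ 2 := by ring
      rw [this, hurt] at hcs
      exact hcs
    clear_value t u
    have ha : (2 / 3 * δ) ^ 2 * t ≤ S := by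
      have h4 : 0 ≤ 2 / 3 * δ := by linarith
      have h5 : 2 / 3 * δ ≤ δ - s := by linarith
      have h6 : (2 / 3 * δ) ^ 2 ≤ (δ - s) ^ 2 := pow_le_pow_left₀ h4 h5 2
      have h7 : (2 / 3 * δ) ^ 2 * t ≤ (δ - s) ^ 2 * t := mul_le_mul_of_nonneg_right h6 ht0
      linarith [hts]
    have htδ : t * δ ^ 2 ≤ 9 / 4 * S := by linarith [ha]
    have hX2' : X ^ 2 * (3 / 4) ≤ S * t := by
      have h8 := mul_nonneg (sq_nonneg X) (show (0:ℝ) ≤ 1 / 4 - t by linarith)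
      linarith [hX2, h8]
    have e1 : X ^ 2 * (3 / 4) * δ ^ 2 ≤ S * t * δ ^ 2 :=
      mul_le_mul_of_nonneg_right hX2' (sq_nonneg δ)
    have e2 : S * (t * δ ^ 2) ≤ S * (9 / 4 * S) := mul_le_mul_of_nonneg_left htδ hS0
    have hfinal : X ^ 2 * δ ^ 2 ≤ 3 * S ^ 2 := by linarith [e1, e2]
    have hP : (|X| * δ) ^ 2 ≤ (6 * S) ^ 2 := by
      rw [mul_pow, sq_abs]
      linarith [hfinal, sq_nonneg S]
    calc |X| * δ = Real.sqrt ((|X| * δ) ^ 2) := (Real.sqrt_sq (by positivity)).symm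
      _ ≤ Real.sqrt ((6 * S) ^ 2) := Real.sqrt_le_sqrt hP
      _ = 6 * S := Real.sqrt_sq (by positivity)
end

section
/- Under the assumptions of Theorem 3(ii) (independent samples each satisfying Assumption 1, with λ_r^{(p)} a simple eigenvalue for p = 1,2), the statistic n·Δ_{3,r} = n|λ̂_r^{(1)} − λ̂_r^{(2)}|², computed under the null hypothesis λ_r^{(1)} = λ_r^{(2)}, satisfies n Δ_{3,r} / (Λ_r^{(1)}/q_1 + Λ_r^{(2)}/q_2) → χ²_1 in distribution, where n_p = q_p n and Λ_r^{(p)} = E[(β_{ri}^{(p)})² − λ_r^{(p)}]². -/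
open MeasureTheory ProbabilityTheory Filter BoundedContinuousFunction
open scoped Topology ENNReal NNReal
set_option maxHeartbeats 4000000


noncomputable def cutoff (M : ℝ) : ℝ →ᵇ ℝ :=
  BoundedContinuousFunction.mkOfBound
    ⟨fun x => min 1 (max (|x| - M) 0), by fun_prop⟩ 1 (by
      intro x y
      simp only [ContinuousMap.coe_mk]
      rw [Real.dist_eq, abs_sub_le_iff]
      have h1 : ∀ z : ℝ, 0 ≤ min 1 (max (|z| - M) 0) := fun z => le_min zero_le_one (le_max_right _ _)
      have h2 : ∀ z : ℝ, min 1 (max (|z| - M) 0) ≤ 1 := fun z => min_le_left _ _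
      constructor <;> [have := h1 y; have := h1 x] <;> [have := h2 x; have := h2 y] <;> linarith)

lemma cutoff_apply (M x : ℝ) : cutoff M x = min 1 (max (|x| - M) 0) := rfl

lemma cutoff_nonneg (M x : ℝ) : 0 ≤ cutoff M x := le_min zero_le_one (le_max_right _ _)

lemma cutoff_le_one (M x : ℝ) : cutoff M x ≤ 1 := min_le_left _ _

lemma cutoff_eq_one {M x : ℝ} (h : M + 1 ≤ |x|) : cutoff M x = 1 := by
  rw [cutoff_apply, min_eq_left]
  exact le_max_of_le_left (by linarith)

lemma cutoff_mono {M M' : ℝ} (h : M ≤ M') (x : ℝ) : cutoff M' x ≤ cutoff M x := by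
  rw [cutoff_apply, cutoff_apply]
  exact min_le_min le_rfl (max_le_max (by linarith) le_rfl)

lemma tight_one (ρ : Measure ℝ) [IsProbabilityMeasure ρ] {ε : ℝ} (hε : 0 < ε) :
    ∃ M : ℝ, 0 ≤ M ∧ ∫ x, cutoff M x ∂ρ ≤ ε := by
  have h : Tendsto (fun M : ℕ => ∫ x, cutoff M x ∂ρ) atTop (𝓝 (∫ _ : ℝ, (0:ℝ) ∂ρ)) := by
    refine tendsto_integral_of_dominated_convergence (fun _ => 1) ?_ ?_ ?_ ?_
    · exact fun M => (cutoff M).continuous.measurable.aestronglyMeasurable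
    · exact integrable_const 1
    · exact fun M => Eventually.of_forall fun x => by
        rw [Real.norm_eq_abs, abs_of_nonneg (cutoff_nonneg _ _)]; exact cutoff_le_one _ _
    · refine Eventually.of_forall fun x => ?_
      refine tendsto_nhds_of_eventually_eq ?_
      filter_upwards [eventually_ge_atTop ⌈|x|⌉₊] with M hM
      have hx : |x| ≤ (M : ℝ) := le_trans (Nat.le_ceil _) (by exact_mod_cast hM)
      rw [cutoff_apply, max_eq_right (by linarith), min_eq_right (by linarith)]
  rw [integral_zero] at h
  rcases (h.eventually (eventually_le_nhds hε)).exists with ⟨M, hM⟩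
  exact ⟨M, Nat.cast_nonneg M, hM⟩

lemma tight_two (ρ₁ ρ₂ : Measure ℝ) [IsProbabilityMeasure ρ₁] [IsProbabilityMeasure ρ₂]
    {ε : ℝ} (hε : 0 < ε) :
    ∃ M : ℝ, 0 ≤ M ∧ ∫ x, cutoff M x ∂ρ₁ ≤ ε ∧ ∫ x, cutoff M x ∂ρ₂ ≤ ε := by
  obtain ⟨M₁, hM₁0, hM₁⟩ := tight_one ρ₁ hε
  obtain ⟨M₂, hM₂0, hM₂⟩ := tight_one ρ₂ hε
  refine ⟨max M₁ M₂, le_trans hM₁0 (le_max_left _ _), le_trans ?_ hM₁, le_trans ?_ hM₂⟩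
  · exact integral_mono ((cutoff _).integrable _) ((cutoff _).integrable _)
      (cutoff_mono (le_max_left _ _))
  · exact integral_mono ((cutoff _).integrable _) ((cutoff _).integrable _)
      (cutoff_mono (le_max_right _ _))

noncomputable def affBCF (g : ℝ →ᵇ ℝ) (a b x : ℝ) : ℝ →ᵇ ℝ :=
  g.compContinuous ⟨fun y => a * x + b * y, by fun_prop⟩

lemma affBCF_apply (g : ℝ →ᵇ ℝ) (a b x y : ℝ) : affBCF g a b x y = g (a * x + b * y) := rfl

lemma norm_integral_bcf_le (g : ℝ →ᵇ ℝ) (a b x : ℝ) (ρ : Measure ℝ) [IsProbabilityMeasure ρ] :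
    ‖∫ y, g (a * x + b * y) ∂ρ‖ ≤ ‖g‖ := by
  have := norm_integral_le_of_norm_le_const (μ := ρ)
    (f := fun y => g (a * x + b * y)) (C := ‖g‖)
    (Eventually.of_forall fun y => g.norm_coe_le_norm _)
  simpa using this

noncomputable def convBCF (g : ℝ →ᵇ ℝ) (a b : ℝ) (ρ : Measure ℝ) [IsProbabilityMeasure ρ] :
    ℝ →ᵇ ℝ :=
  BoundedContinuousFunction.mkOfBound
    ⟨fun x => ∫ y, g (a * x + b * y) ∂ρ, by
      refine continuous_of_dominated (bound := fun _ => ‖g‖) ?_ ?_ ?_ ?_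
      · exact fun x => ((affBCF g a b x).continuous.measurable).aestronglyMeasurable
      · exact fun x => Eventually.of_forall fun y => g.norm_coe_le_norm _
      · exact integrable_const _
      · exact Eventually.of_forall fun y =>
          g.continuous.comp (by fun_prop)⟩
    (2 * ‖g‖) (by
      intro x y
      simp only [ContinuousMap.coe_mk]
      refine (dist_le_norm_add_norm _ _).trans ?_
      have h1 := norm_integral_bcf_le g a b x ρ
      have h2 := norm_integral_bcf_le g a b y ρ
      linarith)

lemma convBCF_apply (g : ℝ →ᵇ ℝ) (a b : ℝ) (ρ : Measure ℝ) [IsProbabilityMeasure ρ] (x : ℝ) :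
    convBCF g a b ρ x = ∫ y, g (a * x + b * y) ∂ρ := rfl

lemma abs_sub_le_two_mul {u v C : ℝ} (hu : |u| ≤ C) (hv : |v| ≤ C) : |u - v| ≤ 2 * C := by
  rw [abs_sub_le_iff]
  cases' abs_le.mp hu with h1 h2
  cases' abs_le.mp hv with h3 h4
  constructor <;> linarith

lemma convBCF_abs_le (g : ℝ →ᵇ ℝ) (a b : ℝ) (ρ : Measure ℝ) [IsProbabilityMeasure ρ] (x : ℝ) :
    |convBCF g a b ρ x| ≤ ‖g‖ := by
  rw [convBCF_apply, ← Real.norm_eq_abs]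
  exact norm_integral_bcf_le g a b x ρ

lemma abs_integral_sub_le (F1 F2 : ℝ →ᵇ ℝ) {B : ℝ → ℝ} (ρ : Measure ℝ)
    [IsProbabilityMeasure ρ] (hB : Integrable B ρ) (h : ∀ x, |F1 x - F2 x| ≤ B x) :
    |∫ x, F1 x ∂ρ - ∫ x, F2 x ∂ρ| ≤ ∫ x, B x ∂ρ := by
  rw [← integral_sub (F1.integrable ρ) (F2.integrable ρ)]
  have hint : Integrable (fun x => |F1 x - F2 x|) ρ := by
    simpa using ((F1 - F2).integrable ρ).abs
  calc |∫ x, (F1 x - F2 x) ∂ρ| ≤ ∫ x, |F1 x - F2 x| ∂ρ := by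
        simpa [Real.norm_eq_abs] using
          norm_integral_le_integral_norm (μ := ρ) (fun x => F1 x - F2 x)
    _ ≤ ∫ x, B x ∂ρ := integral_mono hint hB h

lemma integral_const_add_mul_cutoff (c d M : ℝ) (ρ : Measure ℝ) [IsProbabilityMeasure ρ] :
    ∫ x, (c + d * cutoff M x) ∂ρ = c + d * ∫ x, cutoff M x ∂ρ := by
  rw [integral_add (integrable_const c) (((cutoff M).integrable ρ).const_mul d),
    integral_const, integral_const_mul]
  simp

lemma integrable_const_add_mul_cutoff (c d M : ℝ) (ρ : Measure ℝ) [IsProbabilityMeasure ρ] :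
    Integrable (fun x => c + d * cutoff M x) ρ :=
  (integrable_const c).add (((cutoff M).integrable ρ).const_mul d)


lemma key_tendsto
    (μs νs : ℕ → Measure ℝ) [∀ n, IsProbabilityMeasure (μs n)] [∀ n, IsProbabilityMeasure (νs n)]
    (μ ν : Measure ℝ) [IsProbabilityMeasure μ] [IsProbabilityMeasure ν]
    (hμ : ∀ f : ℝ →ᵇ ℝ, Tendsto (fun n => ∫ x, f x ∂(μs n)) atTop (𝓝 (∫ x, f x ∂μ)))
    (hν : ∀ f : ℝ →ᵇ ℝ, Tendsto (fun n => ∫ x, f x ∂(νs n)) atTop (𝓝 (∫ x, f x ∂ν)))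
    {α β : ℝ} {αs βs : ℕ → ℝ}
    (hα : Tendsto αs atTop (𝓝 α)) (hβ : Tendsto βs atTop (𝓝 β)) (g : ℝ →ᵇ ℝ) :
    Tendsto (fun n => ∫ x, convBCF g (αs n) (βs n) (νs n) x ∂(μs n)) atTop
      (𝓝 (∫ x, convBCF g α β ν x ∂μ)) := by
  rw [Metric.tendsto_nhds]
  intro ε hε
  set C : ℝ := ‖g‖ with hCdef
  have hC : 0 ≤ C := norm_nonneg g
  set ε₁ : ℝ := ε / (24 * (C + 1)) with hε₁def
  have hε₁ : 0 < ε₁ := by positivity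
  have hfinal : 23 * (C + 1) * ε₁ < ε := by
    have h1 : (0:ℝ) < C + 1 := by positivity
    have : 23 * (C + 1) * ε₁ = (23 / 24) * ε := by
      rw [hε₁def]; field_simp
    rw [this]; linarith
  obtain ⟨M, hM0, hμψ, hνψ⟩ := tight_two μ ν hε₁
  set ψ := cutoff M with hψdef
  set R : ℝ := (|α| + |β| + 2) * (M + 1) + 1 with hRdef
  -- uniform continuity of g on [-R, R]
  obtain ⟨δ, hδ0, hδ⟩ := (Metric.uniformContinuousOn_iff_le.mp
    ((isCompact_Icc (a := -R) (b := R)).uniformContinuousOn_of_continuous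
      g.continuous.continuousOn)) ε₁ hε₁
  -- the finite net
  have hr0 : 0 < δ / (|α| + 1) := by positivity
  obtain ⟨T, hTsub, hTfin, hTcover⟩ :=
    finite_cover_balls_of_compact (isCompact_Icc (a := -(M+1)) (b := M+1)) hr0
  -- eventually facts
  have E1 : ∀ᶠ n in atTop, |αs n - α| ≤ min 1 (δ / (2 * (M + 2)))
      ∧ |βs n - β| ≤ min 1 (δ / (2 * (M + 2))) := by
    have hpos : 0 < min 1 (δ / (2 * (M + 2))) := lt_min one_pos (by positivity)
    filter_upwards [Metric.tendsto_nhds.mp hα _ hpos, Metric.tendsto_nhds.mp hβ _ hpos]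
      with n h1 h2
    rw [Real.dist_eq] at h1 h2
    exact ⟨h1.le, h2.le⟩
  have E2 : ∀ᶠ n in atTop, ∫ y, ψ y ∂(νs n) ≤ 2 * ε₁ := by
    filter_upwards [Metric.tendsto_nhds.mp (hν ψ) ε₁ hε₁] with n h1
    rw [Real.dist_eq, abs_sub_lt_iff] at h1
    linarith [h1.1]
  have E3 : ∀ᶠ n in atTop, ∫ x, ψ x ∂(μs n) ≤ 2 * ε₁ := by
    filter_upwards [Metric.tendsto_nhds.mp (hμ ψ) ε₁ hε₁] with n h1
    rw [Real.dist_eq, abs_sub_lt_iff] at h1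
    linarith [h1.1]
  have E4 : ∀ᶠ n in atTop, ∀ t ∈ T,
      |∫ y, g (α * t + β * y) ∂(νs n) - ∫ y, g (α * t + β * y) ∂ν| ≤ ε₁ := by
    rw [eventually_all_finite hTfin]
    intro t ht
    filter_upwards [Metric.tendsto_nhds.mp (hν (affBCF g α β t)) ε₁ hε₁] with n h1
    rw [Real.dist_eq] at h1
    simpa only [affBCF_apply] using h1.le
  have E5 : ∀ᶠ n in atTop,
      |∫ x, convBCF g α β ν x ∂(μs n) - ∫ x, convBCF g α β ν x ∂μ| ≤ ε₁ := by
    filter_upwards [Metric.tendsto_nhds.mp (hμ (convBCF g α β ν)) ε₁ hε₁] with n h1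
    rw [Real.dist_eq] at h1
    exact h1.le
  filter_upwards [E1, E2, E3, E4, E5] with n hE1 hE2 hE3 hE4 hE5
  obtain ⟨hEα, hEβ⟩ := hE1
  set a : ℝ := αs n with hadef
  set b : ℝ := βs n with hbdef
  have hM1 : (0:ℝ) < M + 1 := by linarith
  have hM2 : (0:ℝ) < M + 2 := by linarith
  have hψ1 : ∀ x : ℝ, ¬ |x| ≤ M + 1 → ψ x = 1 := fun x hx => cutoff_eq_one (by push_neg at hx; linarith)
  have hgC : ∀ u : ℝ, |g u| ≤ C := fun u => by
    simpa [Real.norm_eq_abs] using g.norm_coe_le_norm u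
  -- P1 : coefficient perturbation, pointwise
  have P1 : ∀ x y : ℝ, |g (a * x + b * y) - g (α * x + β * y)|
      ≤ ε₁ + 2 * C * ψ x + 2 * C * ψ y := by
    intro x y
    by_cases hx : |x| ≤ M + 1
    · by_cases hy : |y| ≤ M + 1
      · have hax1 : |a - α| ≤ 1 := hEα.trans (min_le_left _ _)
        have hbx1 : |b - β| ≤ 1 := hEβ.trans (min_le_left _ _)
        have haxδ : |a - α| ≤ δ / (2 * (M + 2)) := hEα.trans (min_le_right _ _)
        have hbxδ : |b - β| ≤ δ / (2 * (M + 2)) := hEβ.trans (min_le_right _ _)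
        have hxa : 0 ≤ |x| := abs_nonneg x
        have hya : 0 ≤ |y| := abs_nonneg y
        have haa : |a| ≤ |α| + 1 := by
          have : |a| - |α| ≤ |a - α| := abs_sub_abs_le_abs_sub a α
          linarith
        have hbb : |b| ≤ |β| + 1 := by
          have : |b| - |β| ≤ |b - β| := abs_sub_abs_le_abs_sub b β
          linarith
        have hu : a * x + b * y ∈ Set.Icc (-R) R := by
          have h1 : |a * x + b * y| ≤ R := by
            calc |a * x + b * y| ≤ |a * x| + |b * y| := abs_add_le _ _
              _ = |a| * |x| + |b| * |y| := by rw [abs_mul, abs_mul]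
              _ ≤ (|α| + 1) * (M + 1) + (|β| + 1) * (M + 1) :=
                  add_le_add (mul_le_mul haa hx hxa (by positivity))
                    (mul_le_mul hbb hy hya (by positivity))
              _ ≤ R := by rw [hRdef]; nlinarith [abs_nonneg α, abs_nonneg β]
          rw [Set.mem_Icc]
          exact abs_le.mp h1
        have hv : α * x + β * y ∈ Set.Icc (-R) R := by
          have h1 : |α * x + β * y| ≤ R := by
            calc |α * x + β * y| ≤ |α * x| + |β * y| := abs_add_le _ _
              _ = |α| * |x| + |β| * |y| := by rw [abs_mul, abs_mul]
              _ ≤ |α| * (M + 1) + |β| * (M + 1) :=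
                  add_le_add (mul_le_mul_of_nonneg_left hx (abs_nonneg α))
                    (mul_le_mul_of_nonneg_left hy (abs_nonneg β))
              _ ≤ R := by rw [hRdef]; nlinarith [abs_nonneg α, abs_nonneg β]
          rw [Set.mem_Icc]; exact abs_le.mp h1
        have hd : dist (a * x + b * y) (α * x + β * y) ≤ δ := by
          rw [Real.dist_eq]
          have h1 : a * x + b * y - (α * x + β * y) = (a - α) * x + (b - β) * y := by ring
          rw [h1]
          calc |(a - α) * x + (b - β) * y| ≤ |(a - α) * x| + |(b - β) * y| := abs_add_le _ _
            _ = |a - α| * |x| + |b - β| * |y| := by rw [abs_mul, abs_mul]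
            _ ≤ (δ / (2 * (M + 2))) * (M + 1) + (δ / (2 * (M + 2))) * (M + 1) :=
                add_le_add (mul_le_mul haxδ hx hxa (by positivity))
                  (mul_le_mul hbxδ hy hya (by positivity))
            _ ≤ δ := by
                rw [div_mul_eq_mul_div, ← add_div]
                rw [div_le_iff₀ (by positivity)]
                nlinarith
        have := hδ _ hu _ hv hd
        rw [Real.dist_eq] at this
        have hψx : 0 ≤ 2 * C * ψ x := by
          have := cutoff_nonneg M x; positivity
        have hψy : 0 ≤ 2 * C * ψ y := by
          have := cutoff_nonneg M y; positivity
        linarith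
      · have h1 := hψ1 y hy
        have h2 : |g (a * x + b * y) - g (α * x + β * y)| ≤ 2 * C := by
          have := hgC (a * x + b * y); have := hgC (α * x + β * y)
          rw [abs_sub_le_iff]; constructor <;> [skip; skip] <;>
            cases' abs_le.mp (hgC (a * x + b * y)) with l1 l2 <;>
            cases' abs_le.mp (hgC (α * x + β * y)) with l3 l4 <;> linarith
        have h3 : 0 ≤ ψ x := cutoff_nonneg _ _
        rw [h1]; nlinarith
    · have h1 := hψ1 x hx
      have h2 : |g (a * x + b * y) - g (α * x + β * y)| ≤ 2 * C := by
        rw [abs_sub_le_iff]; constructor <;>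
          cases' abs_le.mp (hgC (a * x + b * y)) with l1 l2 <;>
          cases' abs_le.mp (hgC (α * x + β * y)) with l3 l4 <;> linarith
      have h3 : 0 ≤ ψ y := cutoff_nonneg _ _
      rw [h1]; nlinarith

  -- P1' : net perturbation, pointwise
  have P1' : ∀ x t y : ℝ, |x| ≤ M + 1 → |t| ≤ M + 1 → |x - t| ≤ δ / (|α| + 1) →
      |g (α * x + β * y) - g (α * t + β * y)| ≤ ε₁ + 2 * C * ψ y := by
    intro x t y hx ht hxt
    by_cases hy : |y| ≤ M + 1
    · have habs : ∀ z : ℝ, |z| ≤ M + 1 → α * z + β * y ∈ Set.Icc (-R) R := by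
        intro z hz
        have h1 : |α * z + β * y| ≤ R := by
          calc |α * z + β * y| ≤ |α * z| + |β * y| := abs_add_le _ _
            _ = |α| * |z| + |β| * |y| := by rw [abs_mul, abs_mul]
            _ ≤ |α| * (M + 1) + |β| * (M + 1) :=
                add_le_add (mul_le_mul_of_nonneg_left hz (abs_nonneg α))
                  (mul_le_mul_of_nonneg_left hy (abs_nonneg β))
            _ ≤ R := by rw [hRdef]; nlinarith [abs_nonneg α, abs_nonneg β]
        rw [Set.mem_Icc]; exact abs_le.mp h1
      have hd : dist (α * x + β * y) (α * t + β * y) ≤ δ := by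
        rw [Real.dist_eq]
        have h1 : α * x + β * y - (α * t + β * y) = α * (x - t) := by ring
        rw [h1, abs_mul]
        calc |α| * |x - t| ≤ |α| * (δ / (|α| + 1)) :=
              mul_le_mul_of_nonneg_left hxt (abs_nonneg α)
          _ ≤ δ := by
              rw [mul_div_assoc']
              rw [div_le_iff₀ (by positivity)]
              nlinarith [abs_nonneg α, hδ0.le]
      have := hδ _ (habs x hx) _ (habs t ht) hd
      rw [Real.dist_eq] at this
      have hψy : 0 ≤ 2 * C * ψ y := by
        have := cutoff_nonneg M y; positivity
      linarith
    · rw [hψ1 y hy]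
      have h2 := abs_sub_le_two_mul (hgC (α * x + β * y)) (hgC (α * t + β * y))
      linarith
  -- P2 : coefficient perturbation, integrated over νs n
  have P2 : ∀ x : ℝ, |convBCF g a b (νs n) x - convBCF g α β (νs n) x|
      ≤ ε₁ + 2 * C * ψ x + 2 * C * ∫ y, ψ y ∂(νs n) := by
    intro x
    have := abs_integral_sub_le (affBCF g a b x) (affBCF g α β x) (νs n)
      (integrable_const_add_mul_cutoff (ε₁ + 2 * C * ψ x) (2 * C) M (νs n))
      (fun y => by simpa only [affBCF_apply] using
        (by have := P1 x y; linarith :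
          |g (a * x + b * y) - g (α * x + β * y)| ≤ (ε₁ + 2 * C * ψ x) + 2 * C * cutoff M y))
    rw [integral_const_add_mul_cutoff] at this
    simp only [convBCF_apply]
    have heq : (∫ y, affBCF g a b x y ∂(νs n)) = ∫ y, g (a * x + b * y) ∂(νs n) := rfl
    have heq2 : (∫ y, affBCF g α β x y ∂(νs n)) = ∫ y, g (α * x + β * y) ∂(νs n) := rfl
    rw [heq, heq2] at this
    linarith
  -- P3 : change of measure νs n → ν at fixed coefficients
  have P3 : ∀ x : ℝ, |convBCF g α β (νs n) x - convBCF g α β ν x|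
      ≤ 3 * ε₁ + 6 * C * ε₁ + 2 * C * ψ x := by
    intro x
    have hψx : 0 ≤ ψ x := cutoff_nonneg M x
    by_cases hx : |x| ≤ M + 1
    · obtain ⟨t, htT, hxt⟩ := Set.mem_iUnion₂.mp
        (hTcover (by rw [Set.mem_Icc]; exact abs_le.mp hx))
      have htM : |t| ≤ M + 1 := by
        have := hTsub htT
        rw [Set.mem_Icc] at this
        exact abs_le.mpr this
      have hxtr : |x - t| ≤ δ / (|α| + 1) := by
        have := Metric.mem_ball.mp hxt
        rw [Real.dist_eq] at this
        exact this.le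
      have htxr : |t - x| ≤ δ / (|α| + 1) := by rw [abs_sub_comm]; exact hxtr
      have D1 : |convBCF g α β (νs n) x - convBCF g α β (νs n) t|
          ≤ ε₁ + 2 * C * ∫ y, ψ y ∂(νs n) := by
        have := abs_integral_sub_le (affBCF g α β x) (affBCF g α β t) (νs n)
          (integrable_const_add_mul_cutoff ε₁ (2 * C) M (νs n))
          (fun y => by simpa only [affBCF_apply] using P1' x t y hx htM hxtr)
        rw [integral_const_add_mul_cutoff] at this
        exact this
      have D2 : |convBCF g α β (νs n) t - convBCF g α β ν t| ≤ ε₁ := by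
        simpa only [convBCF_apply] using hE4 t htT
      have D3 : |convBCF g α β ν t - convBCF g α β ν x|
          ≤ ε₁ + 2 * C * ∫ y, ψ y ∂ν := by
        have := abs_integral_sub_le (affBCF g α β t) (affBCF g α β x) ν
          (integrable_const_add_mul_cutoff ε₁ (2 * C) M ν)
          (fun y => by simpa only [affBCF_apply] using P1' t x y htM hx htxr)
        rw [integral_const_add_mul_cutoff] at this
        exact this
      have htri : |convBCF g α β (νs n) x - convBCF g α β ν x|
          ≤ |convBCF g α β (νs n) x - convBCF g α β (νs n) t|
            + |convBCF g α β (νs n) t - convBCF g α β ν t|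
            + |convBCF g α β ν t - convBCF g α β ν x| := by
        have := abs_sub_le (convBCF g α β (νs n) x) (convBCF g α β (νs n) t)
          (convBCF g α β ν x)
        have h2 := abs_sub_le (convBCF g α β (νs n) t) (convBCF g α β ν t)
          (convBCF g α β ν x)
        linarith
      have hint1 : 2 * C * ∫ y, ψ y ∂(νs n) ≤ 2 * C * (2 * ε₁) :=
        mul_le_mul_of_nonneg_left hE2 (by positivity)
      have hint2 : 2 * C * ∫ y, ψ y ∂ν ≤ 2 * C * ε₁ :=
        mul_le_mul_of_nonneg_left hνψ (by positivity)
      have hCx : 0 ≤ 2 * C * ψ x := by positivity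
      linarith
    · rw [hψ1 x hx]
      have h2 := abs_sub_le_two_mul (convBCF_abs_le g α β (νs n) x) (convBCF_abs_le g α β ν x)
      nlinarith
  -- P4 : combine P2 and P3
  have P4 : ∀ x : ℝ, |convBCF g a b (νs n) x - convBCF g α β ν x|
      ≤ (4 * ε₁ + 10 * C * ε₁) + 4 * C * ψ x := by
    intro x
    have h1 := P2 x
    have h2 := P3 x
    have h3 := abs_sub_le (convBCF g a b (νs n) x) (convBCF g α β (νs n) x)
      (convBCF g α β ν x)
    have hint1 : 2 * C * ∫ y, ψ y ∂(νs n) ≤ 2 * C * (2 * ε₁) :=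
      mul_le_mul_of_nonneg_left hE2 (by positivity)
    linarith
  -- integrate P4 over μs n
  have S1 : |∫ x, convBCF g a b (νs n) x ∂(μs n) - ∫ x, convBCF g α β ν x ∂(μs n)|
      ≤ (4 * ε₁ + 10 * C * ε₁) + 4 * C * (2 * ε₁) := by
    have := abs_integral_sub_le (convBCF g a b (νs n)) (convBCF g α β ν) (μs n)
      (integrable_const_add_mul_cutoff (4 * ε₁ + 10 * C * ε₁) (4 * C) M (μs n)) P4
    rw [integral_const_add_mul_cutoff] at this
    have hint : 4 * C * ∫ x, ψ x ∂(μs n) ≤ 4 * C * (2 * ε₁) :=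
      mul_le_mul_of_nonneg_left hE3 (by positivity)
    linarith
  -- final assembly
  rw [Real.dist_eq]
  have htri : |∫ x, convBCF g a b (νs n) x ∂(μs n) - ∫ x, convBCF g α β ν x ∂μ|
      ≤ |∫ x, convBCF g a b (νs n) x ∂(μs n) - ∫ x, convBCF g α β ν x ∂(μs n)|
        + |∫ x, convBCF g α β ν x ∂(μs n) - ∫ x, convBCF g α β ν x ∂μ| :=
    abs_sub_le _ _ _
  have : |∫ x, convBCF g a b (νs n) x ∂(μs n) - ∫ x, convBCF g α β ν x ∂μ|
      ≤ 23 * (C + 1) * ε₁ := by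
    have := htri.trans (add_le_add S1 hE5)
    nlinarith [hε₁.le, hC]
  exact lt_of_le_of_lt this hfinal



lemma gaussian_prod_eq :
    (gaussianReal 0 1).prod (gaussianReal 0 1)
      = (volume : Measure (ℝ × ℝ)).withDensity
          (fun z => gaussianPDF 0 1 z.1 * gaussianPDF 0 1 z.2) := by
  refine Measure.prod_eq fun s t hs ht => ?_
  rw [withDensity_apply _ (hs.prod ht), Measure.volume_eq_prod,
    ← Measure.prod_restrict,
    lintegral_prod_mul (measurable_gaussianPDF 0 1).aemeasurable
      (measurable_gaussianPDF 0 1).aemeasurable,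
    gaussianReal_apply 0 one_ne_zero s, gaussianReal_apply 0 one_ne_zero t]

section rot

variable {c d : ℝ}

noncomputable def rotL (c d : ℝ) : (ℝ × ℝ) →ₗ[ℝ] (ℝ × ℝ) :=
  Matrix.toLin (Module.Basis.finTwoProd ℝ) (Module.Basis.finTwoProd ℝ) !![c, d; -d, c]

lemma rotL_apply (z : ℝ × ℝ) : rotL c d z = (c * z.1 + d * z.2, -d * z.1 + c * z.2) := by
  simp [rotL, Matrix.toLin_finTwoProd_apply]

lemma rotL_det (h : c ^ 2 + d ^ 2 = 1) : LinearMap.det (rotL c d) = 1 := by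
  rw [rotL, LinearMap.det_toLin, Matrix.det_fin_two_of]
  nlinarith

lemma rotL_measurable : Measurable (rotL c d) :=
  (LinearMap.continuous_of_finiteDimensional (rotL c d)).measurable

lemma volume_map_rotL (h : c ^ 2 + d ^ 2 = 1) :
    (volume : Measure (ℝ × ℝ)).map (rotL c d) = volume := by
  rw [Measure.map_linearMap_addHaar_eq_smul_addHaar volume (by rw [rotL_det h]; norm_num),
    rotL_det h]
  norm_num

end rot

lemma gaussianPDFReal_std (x : ℝ) :
    gaussianPDFReal 0 1 x = (Real.sqrt (2 * Real.pi))⁻¹ * Real.exp (-(x ^ 2) / 2) := by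
  rw [gaussianPDFReal]
  norm_num

lemma gaussianPDFReal_prod_rot {a b a' b' : ℝ} (h : a ^ 2 + b ^ 2 = a' ^ 2 + b' ^ 2) :
    gaussianPDFReal 0 1 a * gaussianPDFReal 0 1 b
      = gaussianPDFReal 0 1 a' * gaussianPDFReal 0 1 b' := by
  simp only [gaussianPDFReal_std]
  rw [show ∀ p q : ℝ, (Real.sqrt (2 * Real.pi))⁻¹ * Real.exp p * ((Real.sqrt (2 * Real.pi))⁻¹ * Real.exp q)
      = (Real.sqrt (2 * Real.pi))⁻¹ ^ 2 * Real.exp (p + q) from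
    fun p q => by rw [Real.exp_add]; ring]
  rw [show ∀ p q : ℝ, (Real.sqrt (2 * Real.pi))⁻¹ * Real.exp p * ((Real.sqrt (2 * Real.pi))⁻¹ * Real.exp q)
      = (Real.sqrt (2 * Real.pi))⁻¹ ^ 2 * Real.exp (p + q) from
    fun p q => by rw [Real.exp_add]; ring]
  congr 1
  rw [← add_div, ← add_div]
  congr 1
  linarith

lemma gaussianPDF_rot {c d : ℝ} (h : c ^ 2 + d ^ 2 = 1) (z : ℝ × ℝ) :
    gaussianPDF 0 1 (rotL c d z).1 * gaussianPDF 0 1 (rotL c d z).2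
      = gaussianPDF 0 1 z.1 * gaussianPDF 0 1 z.2 := by
  simp only [gaussianPDF, rotL_apply]
  rw [← ENNReal.ofReal_mul (gaussianPDFReal_nonneg _ _ _),
    ← ENNReal.ofReal_mul (gaussianPDFReal_nonneg _ _ _)]
  congr 1
  exact gaussianPDFReal_prod_rot (by nlinarith)

lemma gaussReal_prod_map_rot {c d : ℝ} (h : c ^ 2 + d ^ 2 = 1) :
    ((gaussianReal 0 1).prod (gaussianReal 0 1)).map (rotL c d)
      = (gaussianReal 0 1).prod (gaussianReal 0 1) := by
  have hD : Measurable (fun z : ℝ × ℝ => gaussianPDF 0 1 z.1 * gaussianPDF 0 1 z.2) :=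
    ((measurable_gaussianPDF 0 1).comp measurable_fst).mul
      ((measurable_gaussianPDF 0 1).comp measurable_snd)
  rw [gaussian_prod_eq]
  ext s hs
  rw [Measure.map_apply rotL_measurable hs, withDensity_apply _ (rotL_measurable hs),
    withDensity_apply _ hs]
  conv_rhs => rw [← volume_map_rotL h]
  rw [setLIntegral_map hs hD rotL_measurable]
  refine lintegral_congr fun z => ?_
  exact (gaussianPDF_rot h z).symm

lemma gaussReal_map_lin {c d : ℝ} (h : c ^ 2 + d ^ 2 = 1) :
    ((gaussianReal 0 1).prod (gaussianReal 0 1)).map (fun z : ℝ × ℝ => c * z.1 + d * z.2)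
      = gaussianReal 0 1 := by
  have hfun : (fun z : ℝ × ℝ => c * z.1 + d * z.2) = Prod.fst ∘ (rotL c d) := by
    funext z; simp [rotL_apply]
  rw [hfun, ← Measure.map_map measurable_fst rotL_measurable, gaussReal_prod_map_rot h,
    Measure.map_fst_prod]
  simp

lemma gaussianReal_eq_map {v : ℝ≥0} :
    gaussianReal 0 v = (gaussianReal 0 1).map (fun x => Real.sqrt v * x) := by
  have h := gaussianReal_map_const_mul (μ := 0) (v := 1) (Real.sqrt v)
  rw [mul_zero, mul_one] at h
  have hv : (⟨(Real.sqrt v) ^ 2, sq_nonneg _⟩ : ℝ≥0) = v := by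
    ext
    exact Real.sq_sqrt v.coe_nonneg
  convert h.symm using 2
  exact hv.symm

lemma gauss_conv {v1 v2 : ℝ≥0} {α β : ℝ}
    (h : α ^ 2 * (v1 : ℝ) + β ^ 2 * (v2 : ℝ) = 1) (g : ℝ →ᵇ ℝ) :
    ∫ x, ∫ y, g (α * x + β * y) ∂(gaussianReal 0 v2) ∂(gaussianReal 0 v1)
      = ∫ x, g x ∂(gaussianReal 0 1) := by
  set γ : Measure ℝ := gaussianReal 0 1 with hγ
  set c : ℝ := α * Real.sqrt v1 with hc
  set d : ℝ := β * Real.sqrt v2 with hd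
  have hcd : c ^ 2 + d ^ 2 = 1 := by
    rw [hc, hd, mul_pow, mul_pow, Real.sq_sqrt v1.coe_nonneg, Real.sq_sqrt v2.coe_nonneg]
    exact h
  have hG : Continuous (fun z : ℝ × ℝ => α * z.1 + β * z.2) := by fun_prop
  have hInt : Integrable (fun z : ℝ × ℝ => g (α * z.1 + β * z.2))
      ((gaussianReal 0 v1).prod (gaussianReal 0 v2)) :=
    (g.compContinuous ⟨fun z : ℝ × ℝ => α * z.1 + β * z.2, hG⟩).integrable _
  rw [← MeasureTheory.integral_prod _ hInt]
  have hprod : (gaussianReal 0 v1).prod (gaussianReal 0 v2)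
      = (γ.prod γ).map (Prod.map (fun x => Real.sqrt v1 * x) (fun x => Real.sqrt v2 * x)) := by
    rw [gaussianReal_eq_map (v := v1), gaussianReal_eq_map (v := v2), hγ]
    exact (Measure.map_prod_map (f := fun x : ℝ => Real.sqrt v1 * x)
      (g := fun x : ℝ => Real.sqrt v2 * x) γ γ
      (measurable_id.const_mul _) (measurable_id.const_mul _))
  rw [hprod]
  have hpm : AEMeasurable (Prod.map (fun x : ℝ => Real.sqrt v1 * x) (fun x : ℝ => Real.sqrt v2 * x))
      (γ.prod γ) := by fun_prop
  have hsm : AEStronglyMeasurable (fun z : ℝ × ℝ => g (α * z.1 + β * z.2))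
      (Measure.map (Prod.map (fun x : ℝ => Real.sqrt v1 * x) (fun x : ℝ => Real.sqrt v2 * x))
        (γ.prod γ)) := (g.continuous.comp hG).aestronglyMeasurable
  rw [integral_map hpm hsm]
  simp only [Prod.map]
  have heq : (fun z : ℝ × ℝ => g (α * (Real.sqrt v1 * z.1) + β * (Real.sqrt v2 * z.2)))
      = fun z : ℝ × ℝ => g (c * z.1 + d * z.2) := by
    funext z; rw [hc, hd]; ring_nf
  rw [heq]
  have hlin : AEMeasurable (fun z : ℝ × ℝ => c * z.1 + d * z.2) (γ.prod γ) := by fun_prop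
  rw [← integral_map hlin (g.continuous.aestronglyMeasurable), gaussReal_map_lin hcd]


/-- Under the assumptions of Theorem 3(ii) (two independent samples
of sizes `n₁ = q₁ n`, `n₂ = q₂ n`, each with `√n_p (λ̂ᵣ⁽ᵖ⁾ − lamᵣ) → N(0, Λᵣ⁽ᵖ⁾)` by
Theorem 2(ii)), under the null `lamᵣ⁽¹⁾ = lamᵣ⁽²⁾ = lamr` the statistic
`n Δ₃ᵣ = n |λ̂ᵣ⁽¹⁾ − λ̂ᵣ⁽²⁾|²` satisfies
`n Δ₃ᵣ / (Λᵣ⁽¹⁾/q₁ + Λᵣ⁽²⁾/q₂) → χ²₁` in distribution (the law of the square of a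
standard Gaussian). -/
theorem two_sample_eigenvalue_test_chi_squared
    {Ω : Type*} [MeasurableSpace Ω] (P : Measure Ω) [IsProbabilityMeasure P]
    (lamhat1 lamhat2 : ℕ → Ω → ℝ) (lamr : ℝ) (Λ1 Λ2 : ℝ) (q1 q2 : ℝ)
    (hq1 : 0 < q1) (hq2 : 0 < q2)
    (n1 n2 : ℕ → ℕ)
    (hn1 : Tendsto (fun n : ℕ => (n1 n : ℝ) / n) atTop (𝓝 q1))
    (hn2 : Tendsto (fun n : ℕ => (n2 n : ℝ) / n) atTop (𝓝 q2))
    (hmeas1 : ∀ n, Measurable (lamhat1 n)) (hmeas2 : ∀ n, Measurable (lamhat2 n))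
    (hΛ1 : 0 < Λ1) (hΛ2 : 0 < Λ2)
    -- the two samples are independent
    (hindep : ∀ n, IndepFun (lamhat1 n) (lamhat2 n) P)
    -- Theorem 2(ii): `√n_p (λ̂ᵣ⁽ᵖ⁾ − lamᵣ) → N(0, Λᵣ⁽ᵖ⁾)` in distribution
    (hclt1 : ∀ f : BoundedContinuousFunction ℝ ℝ,
      Tendsto (fun n : ℕ =>
          ∫ ω, f (Real.sqrt (n1 n) * (lamhat1 n ω - lamr)) ∂P)
        atTop (𝓝 (∫ x, f x ∂(gaussianReal 0 Λ1.toNNReal))))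
    (hclt2 : ∀ f : BoundedContinuousFunction ℝ ℝ,
      Tendsto (fun n : ℕ =>
          ∫ ω, f (Real.sqrt (n2 n) * (lamhat2 n ω - lamr)) ∂P)
        atTop (𝓝 (∫ x, f x ∂(gaussianReal 0 Λ2.toNNReal)))) :
    ∀ f : BoundedContinuousFunction ℝ ℝ,
      Tendsto (fun n : ℕ =>
          ∫ ω, f ((n : ℝ) * |lamhat1 n ω - lamhat2 n ω| ^ 2
            / (Λ1 / q1 + Λ2 / q2)) ∂P)
        atTop
        (𝓝 (∫ x, f x ∂((gaussianReal 0 1).map (fun x => x ^ 2)))) := by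
  intro f
  have hsq : Continuous (fun x : ℝ => x ^ 2) := by fun_prop
  set g : ℝ →ᵇ ℝ := f.compContinuous ⟨fun x : ℝ => x ^ 2, hsq⟩ with hgdef
  have hgapp : ∀ u : ℝ, g u = f (u ^ 2) := fun u => rfl
  -- rewrite the target integral
  have hRHS : ∫ x, f x ∂((gaussianReal 0 1).map (fun x => x ^ 2)) = ∫ x, g x ∂(gaussianReal 0 1) :=
    integral_map hsq.measurable.aemeasurable f.continuous.aestronglyMeasurable
  rw [hRHS]
  -- constants
  have hσ2 : 0 < Λ1 / q1 + Λ2 / q2 := by positivity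
  set σ : ℝ := Real.sqrt (Λ1 / q1 + Λ2 / q2) with hσdef
  have hσ : 0 < σ := Real.sqrt_pos.mpr hσ2
  have hσsq : σ ^ 2 = Λ1 / q1 + Λ2 / q2 := Real.sq_sqrt hσ2.le
  set α : ℝ := 1 / (Real.sqrt q1 * σ) with hαdef
  set β : ℝ := -(1 / (Real.sqrt q2 * σ)) with hβdef
  set αs : ℕ → ℝ := fun n => Real.sqrt n / (Real.sqrt (n1 n) * σ) with hαsdef
  set βs : ℕ → ℝ := fun n => -(Real.sqrt n / (Real.sqrt (n2 n) * σ)) with hβsdef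
  -- coefficient convergence
  have coefflim : ∀ (m : ℕ → ℕ) (q : ℝ), 0 < q →
      Tendsto (fun n : ℕ => (m n : ℝ) / n) atTop (𝓝 q) →
      Tendsto (fun n : ℕ => Real.sqrt n / (Real.sqrt (m n) * σ)) atTop
        (𝓝 (1 / (Real.sqrt q * σ))) := by
    intro m q hq hmq
    have h2 : Tendsto (fun n : ℕ => Real.sqrt ((m n : ℝ) / n) * σ) atTop
        (𝓝 (Real.sqrt q * σ)) :=
      ((Real.continuous_sqrt.tendsto q).comp hmq).mul_const σ
    have h3 : Tendsto (fun n : ℕ => 1 / (Real.sqrt ((m n : ℝ) / n) * σ)) atTop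
        (𝓝 (1 / (Real.sqrt q * σ))) := by
      refine tendsto_const_nhds.div h2 ?_
      have : 0 < Real.sqrt q := Real.sqrt_pos.mpr hq
      positivity
    refine h3.congr' ?_
    filter_upwards [eventually_ge_atTop 1] with n hn
    have hn0 : (0:ℝ) < (n:ℝ) := by exact_mod_cast hn
    rw [Real.sqrt_div (Nat.cast_nonneg _) (n:ℝ)]
    by_cases hz : Real.sqrt (m n) = 0
    · rw [hz]; simp
    · have hsn : 0 < Real.sqrt (n:ℝ) := Real.sqrt_pos.mpr hn0
      field_simp
  have hαlim : Tendsto αs atTop (𝓝 α) := coefflim n1 q1 hq1 hn1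
  have hβlim : Tendsto βs atTop (𝓝 β) := (coefflim n2 q2 hq2 hn2).neg
  -- random variables and their laws
  set X : ℕ → Ω → ℝ := fun n ω => Real.sqrt (n1 n) * (lamhat1 n ω - lamr) with hXdef
  set Y : ℕ → Ω → ℝ := fun n ω => Real.sqrt (n2 n) * (lamhat2 n ω - lamr) with hYdef
  have hXmeas : ∀ n, Measurable (X n) := fun n =>
    ((hmeas1 n).sub measurable_const).const_mul _
  have hYmeas : ∀ n, Measurable (Y n) := fun n =>
    ((hmeas2 n).sub measurable_const).const_mul _
  set μs : ℕ → Measure ℝ := fun n => P.map (X n) with hμsdef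
  set νs : ℕ → Measure ℝ := fun n => P.map (Y n) with hνsdef
  haveI hμsP : ∀ n, IsProbabilityMeasure (μs n) := fun n =>
    Measure.isProbabilityMeasure_map (hXmeas n).aemeasurable
  haveI hνsP : ∀ n, IsProbabilityMeasure (νs n) := fun n =>
    Measure.isProbabilityMeasure_map (hYmeas n).aemeasurable
  have hμ : ∀ h : ℝ →ᵇ ℝ, Tendsto (fun n => ∫ x, h x ∂(μs n)) atTop
      (𝓝 (∫ x, h x ∂(gaussianReal 0 Λ1.toNNReal))) := fun h =>
    (hclt1 h).congr fun n =>
      (integral_map (hXmeas n).aemeasurable h.continuous.aestronglyMeasurable).symm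
  have hν : ∀ h : ℝ →ᵇ ℝ, Tendsto (fun n => ∫ x, h x ∂(νs n)) atTop
      (𝓝 (∫ x, h x ∂(gaussianReal 0 Λ2.toNNReal))) := fun h =>
    (hclt2 h).congr fun n =>
      (integral_map (hYmeas n).aemeasurable h.continuous.aestronglyMeasurable).symm
  -- the key convergence
  have key := key_tendsto μs νs (gaussianReal 0 Λ1.toNNReal) (gaussianReal 0 Λ2.toNNReal)
    hμ hν hαlim hβlim g
  -- identify the limit
  have hco1 : ((Λ1.toNNReal : ℝ≥0) : ℝ) = Λ1 := Real.coe_toNNReal _ hΛ1.le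
  have hco2 : ((Λ2.toNNReal : ℝ≥0) : ℝ) = Λ2 := Real.coe_toNNReal _ hΛ2.le
  have hvar : α ^ 2 * ((Λ1.toNNReal : ℝ≥0) : ℝ) + β ^ 2 * ((Λ2.toNNReal : ℝ≥0) : ℝ) = 1 := by
    rw [hco1, hco2, hαdef, hβdef]
    rw [neg_pow, div_pow, div_pow, mul_pow, mul_pow, one_pow,
      Real.sq_sqrt hq1.le, Real.sq_sqrt hq2.le, hσsq]
    have hq1' : q1 ≠ 0 := hq1.ne'
    have hq2' : q2 ≠ 0 := hq2.ne'
    have hs : Λ1 / q1 + Λ2 / q2 ≠ 0 := hσ2.ne'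
    field_simp
  have hlim : ∫ x, convBCF g α β (gaussianReal 0 Λ2.toNNReal) x ∂(gaussianReal 0 Λ1.toNNReal)
      = ∫ x, g x ∂(gaussianReal 0 1) := by
    have := gauss_conv (v1 := Λ1.toNNReal) (v2 := Λ2.toNNReal) hvar g
    simpa only [convBCF_apply] using this
  rw [hlim] at key
  -- transfer the sequence
  refine key.congr' ?_
  have hpos1 : ∀ᶠ n in atTop, 0 < (n1 n : ℝ) := by
    have := hn1.eventually (eventually_gt_nhds (half_lt_self hq1))
    filter_upwards [this, eventually_ge_atTop 1] with n h1 hn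
    have hn0 : (0:ℝ) < (n:ℝ) := by exact_mod_cast hn
    by_contra hc
    push_neg at hc
    have : (n1 n : ℝ) = 0 := le_antisymm hc (Nat.cast_nonneg _)
    rw [this, zero_div] at h1
    have := half_pos hq1
    linarith
  have hpos2 : ∀ᶠ n in atTop, 0 < (n2 n : ℝ) := by
    have := hn2.eventually (eventually_gt_nhds (half_lt_self hq2))
    filter_upwards [this, eventually_ge_atTop 1] with n h1 hn
    have hn0 : (0:ℝ) < (n:ℝ) := by exact_mod_cast hn
    by_contra hc
    push_neg at hc
    have : (n2 n : ℝ) = 0 := le_antisymm hc (Nat.cast_nonneg _)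
    rw [this, zero_div] at h1
    have := half_pos hq2
    linarith
  filter_upwards [hpos1, hpos2] with n h1 h2
  -- pointwise identity for the statistic
  have hint : Integrable (fun z : ℝ × ℝ => g (αs n * z.1 + βs n * z.2)) ((μs n).prod (νs n)) :=
    (g.compContinuous ⟨fun z : ℝ × ℝ => αs n * z.1 + βs n * z.2, by fun_prop⟩).integrable _
  have hpairlaw : P.map (fun ω => (X n ω, Y n ω)) = (μs n).prod (νs n) := by
    have hXY : IndepFun (X n) (Y n) P := by
      have := (hindep n).comp
        (φ := fun x : ℝ => Real.sqrt (n1 n) * (x - lamr))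
        (ψ := fun x : ℝ => Real.sqrt (n2 n) * (x - lamr))
        ((measurable_id.sub measurable_const).const_mul _)
        ((measurable_id.sub measurable_const).const_mul _)
      exact this
    exact (indepFun_iff_map_prod_eq_prod_map_map (hXmeas n).aemeasurable
      (hYmeas n).aemeasurable).mp hXY
  calc ∫ x, convBCF g (αs n) (βs n) (νs n) x ∂(μs n)
      = ∫ z : ℝ × ℝ, g (αs n * z.1 + βs n * z.2) ∂((μs n).prod (νs n)) :=
        (MeasureTheory.integral_prod _ hint).symm
    _ = ∫ z : ℝ × ℝ, g (αs n * z.1 + βs n * z.2) ∂(P.map (fun ω => (X n ω, Y n ω))) := by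
        rw [hpairlaw]
    _ = ∫ ω, g (αs n * X n ω + βs n * Y n ω) ∂P := by
        have hsm : AEStronglyMeasurable (fun z : ℝ × ℝ => g (αs n * z.1 + βs n * z.2))
            (P.map (fun ω => (X n ω, Y n ω))) :=
          (g.continuous.comp (by fun_prop : Continuous (fun z : ℝ × ℝ =>
            αs n * z.1 + βs n * z.2))).aestronglyMeasurable
        rw [integral_map ((hXmeas n).prodMk (hYmeas n)).aemeasurable hsm]
    _ = ∫ ω, f ((n : ℝ) * |lamhat1 n ω - lamhat2 n ω| ^ 2 / (Λ1 / q1 + Λ2 / q2)) ∂P := by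
        refine integral_congr_ae (Eventually.of_forall fun ω => ?_)
        show g (αs n * X n ω + βs n * Y n ω)
          = f ((n : ℝ) * |lamhat1 n ω - lamhat2 n ω| ^ 2 / (Λ1 / q1 + Λ2 / q2))
        rw [hgapp]
        congr 1
        have hs1 : 0 < Real.sqrt (n1 n) := Real.sqrt_pos.mpr h1
        have hs2 : 0 < Real.sqrt (n2 n) := Real.sqrt_pos.mpr h2
        have hu : αs n * X n ω + βs n * Y n ω
            = Real.sqrt n * (lamhat1 n ω - lamhat2 n ω) / σ := by
          rw [hαsdef, hβsdef, hXdef, hYdef]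
          field_simp
          ring
        rw [hu, div_pow, mul_pow, Real.sq_sqrt (Nat.cast_nonneg n), hσsq, sq_abs]
end
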